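/- Let S ⊂ [-1,1]^n be countably 1-rectifiable and Borel measurable with H^1(S_λ) < ∞ for all λ < ∞, where S_λ = {z ∈ S : b(z) ≤ λ}, let a = ∞ and b : S → [0,∞) be lower semi-continuous. Let γ_j be C-Lipschitz paths with uniformly bounded cost L(γ_j) = ∫_{γ_j^{-1}(S)} b(γ_j)|γ_j'| dt + ∞·H^1-length outside S, converging uniformly to γ. Then H^1(γ([0,1]) \ S) = 0, and moreover for each δ > 0 there exists λ < ∞ with H^1(γ([0,1]) \ S_λ) ≤ δ. -/

import Mathlib

open MeasureTheory Set Filter Topology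
open scoped ENNReal NNReal

noncomputable section

/-- Euclidean space `ℝ^n`. -/
abbrev Euc (n : ℕ) : Type := EuclideanSpace ℝ (Fin n)

/-- The hypercube `[-1,1]^n`. -/
def cube (n : ℕ) : Set (Euc n) := {x | ∀ i, |x i| ≤ 1}

/-- A set is countably `1`-rectifiable if it is a countable union of Lipschitz images of
bounded subsets of `ℝ`. -/
def Countably1Rectifiable {n : ℕ} (S : Set (Euc n)) : Prop :=
  ∃ (f : ℕ → ℝ → Euc n) (A : ℕ → Set ℝ),
    (∀ i, ∃ K : ℝ≥0, LipschitzOnWith K (f i) (A i)) ∧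
    (∀ i, Bornology.IsBounded (A i)) ∧ S = ⋃ i, (f i) '' (A i)

/-- The cost of travelling along a Lipschitz path, for the friction coefficient `bext`
(already extended by the off-network cost outside the network). -/
def pathCost {n : ℕ} (bext : Euc n → ℝ≥0∞) (γ : ℝ → Euc n) : ℝ≥0∞ :=
  ∫⁻ t in Icc (0:ℝ) 1, bext (γ t) * ENNReal.ofReal ‖deriv γ t‖

open Metric

lemma core_bound {n : ℕ} (γ : ℝ → Euc n) (hγ : Continuous γ) {c c' : ℝ} (hc : 0 ≤ c)
    (hcc : c < c') (E : Set ℝ) (hE : MeasurableSet E)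
    (hEd : ∀ t ∈ E, DifferentiableAt ℝ γ t ∧ ‖deriv γ t‖ ≤ c) :
    μH[1] (γ '' E) ≤ ENNReal.ofReal c' * volume E := by
  have hc' : 0 < c' := lt_of_le_of_lt hc hcc
  set Em : ℕ → Set ℝ := fun m =>
    {t | ∀ s, |s - t| < 1 / (m + 1) → ‖γ s - γ t‖ ≤ c' * |s - t|} with hEm
  have hEmclosed : ∀ m, IsClosed (Em m) := by
    intro m
    have : Em m = ⋂ s : ℝ, ({t | 1 / (m+1) ≤ |s - t|} ∪ {t | ‖γ s - γ t‖ ≤ c' * |s - t|}) := by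
      ext t
      simp only [mem_iInter, mem_union, mem_setOf_eq, hEm]
      constructor
      · intro h s
        rcases lt_or_ge (|s - t|) (1/(m+1)) with h1 | h1
        · exact Or.inr (h s h1)
        · exact Or.inl h1
      · intro h s hs
        rcases h s with h1 | h1
        · exact absurd hs (not_lt.2 h1)
        · exact h1
    rw [this]
    refine isClosed_iInter fun s => IsClosed.union ?_ ?_
    · exact isClosed_le continuous_const (by fun_prop)
    · exact isClosed_le (by fun_prop) (by fun_prop)
  have hmem : ∀ t ∈ E, ∃ m, t ∈ Em m := by
    intro t ht
    obtain ⟨hd, hb⟩ := hEd t ht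
    have hder := hd.hasDerivAt
    rw [hasDerivAt_iff_isLittleO] at hder
    have h2 := (hder.def (by linarith : (0:ℝ) < c' - c))
    rw [Metric.eventually_nhds_iff] at h2
    obtain ⟨δ, hδ, hδ2⟩ := h2
    obtain ⟨m, hm⟩ := exists_nat_one_div_lt hδ
    refine ⟨m, fun s hs => ?_⟩
    have hsd : dist s t < δ := lt_trans hs hm
    have := hδ2 hsd
    have h3 : ‖γ s - γ t - (s - t) • deriv γ t‖ ≤ (c' - c) * |s - t| := by
      simpa [Real.norm_eq_abs, dist_eq_norm] using this
    have h4 : ‖(s - t) • deriv γ t‖ ≤ |s - t| * c := by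
      rw [norm_smul, Real.norm_eq_abs]
      exact mul_le_mul_of_nonneg_left hb (abs_nonneg _)
    calc ‖γ s - γ t‖ ≤ ‖γ s - γ t - (s - t) • deriv γ t‖ + ‖(s - t) • deriv γ t‖ := by
          simpa using norm_add_le (γ s - γ t - (s - t) • deriv γ t) ((s - t) • deriv γ t)
      _ ≤ (c' - c) * |s - t| + |s - t| * c := add_le_add h3 h4
      _ = c' * |s - t| := by ring
  -- disjointified pieces
  set D : ℕ → Set ℝ := fun m => Em m \ ⋃ (k : ℕ) (_ : k < m), Em k with hD
  set h : ℕ → ℝ := fun m => 1 / (2 * (m + 1)) with hh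
  have hhpos : ∀ m, 0 < h m := by
    intro m; apply div_pos one_pos; positivity
  set P : ℕ × ℤ → Set ℝ := fun p =>
    E ∩ D p.1 ∩ Ico ((p.2 : ℝ) * h p.1) ((p.2 + 1 : ℤ) * h p.1) with hP
  have hPmeas : ∀ p, MeasurableSet (P p) := by
    intro p
    refine (hE.inter ((hEmclosed p.1).measurableSet.diff ?_)).inter measurableSet_Ico
    exact MeasurableSet.iUnion fun k => MeasurableSet.iUnion fun _ => (hEmclosed k).measurableSet
  have hPsub : ∀ p, P p ⊆ E := fun p => fun t ht => ht.1.1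
  have hcover : E ⊆ ⋃ p : ℕ × ℤ, P p := by
    intro t ht
    obtain ⟨m₀, hm₀⟩ := hmem t ht
    -- minimal m
    have hex : ∃ m, t ∈ Em m := ⟨m₀, hm₀⟩
    classical
    set m := Nat.find hex with hm
    have htm : t ∈ Em m := Nat.find_spec hex
    have htd : t ∈ D m := by
      refine ⟨htm, ?_⟩
      simp only [mem_iUnion, not_exists]
      intro k hk
      exact Nat.find_min hex hk
    set i := ⌊t / h m⌋ with hi
    have hle : (i:ℝ) * h m ≤ t := by
      have h1 := Int.floor_le (t / h m)
      calc (i:ℝ) * h m ≤ t / h m * h m :=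
            mul_le_mul_of_nonneg_right h1 (hhpos m).le
        _ = t := div_mul_cancel₀ t (hhpos m).ne'
    have hlt : t < ((i + 1 : ℤ) : ℝ) * h m := by
      have h1 := Int.lt_floor_add_one (t / h m)
      have h2 : t / h m < ((i + 1 : ℤ) : ℝ) := by push_cast; linarith
      calc t = t / h m * h m := (div_mul_cancel₀ t (hhpos m).ne').symm
        _ < ((i + 1 : ℤ) : ℝ) * h m := mul_lt_mul_of_pos_right h2 (hhpos m)
    exact mem_iUnion.2 ⟨⟨m, i⟩, ⟨⟨ht, htd⟩, ⟨hle, hlt⟩⟩⟩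
  have hPlip : ∀ p, LipschitzOnWith c'.toNNReal γ (P p) := by
    intro p
    apply LipschitzOnWith.of_dist_le' (K := c')
    intro x hx y hy
    rcases eq_or_ne x y with rfl | hxy
    · simp
    have hxe : x ∈ Em p.1 := hx.1.2.1
    have hye : y ∈ Em p.1 := hy.1.2.1
    have hxy2 : |x - y| < 1 / (p.1 + 1) := by
      have h1 : (p.2 : ℝ) * h p.1 ≤ x := hx.2.1
      have h2 : x < ((p.2 + 1 : ℤ) : ℝ) * h p.1 := hx.2.2
      have h3 : (p.2 : ℝ) * h p.1 ≤ y := hy.2.1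
      have h4 : y < ((p.2 + 1 : ℤ) : ℝ) * h p.1 := hy.2.2
      have h5 : ((p.2 + 1 : ℤ) : ℝ) * h p.1 - (p.2 : ℝ) * h p.1 = h p.1 := by
        push_cast; ring
      have h6 : |x - y| < h p.1 := by
        rw [abs_sub_lt_iff]; constructor <;> linarith
      have h7 : h p.1 < 1 / (p.1 + 1) := by
        rw [hh]
        apply div_lt_div_of_pos_left one_pos (by positivity)
        have : (0:ℝ) < (p.1 : ℝ) + 1 := by positivity
        linarith
      linarith
    have := hye x hxy2
    rw [dist_eq_norm, Real.dist_eq]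
    calc ‖γ x - γ y‖ ≤ c' * |x - y| := this
      _ = c' * |x - y| := rfl
  -- put it together
  calc μH[1] (γ '' E) ≤ μH[1] (⋃ p : ℕ × ℤ, γ '' P p) := by
        apply measure_mono
        rw [← image_iUnion]
        exact image_mono hcover
    _ ≤ ∑' p : ℕ × ℤ, μH[1] (γ '' P p) := measure_iUnion_le _
    _ ≤ ∑' p : ℕ × ℤ, ENNReal.ofReal c' * volume (P p) := by
        apply ENNReal.tsum_le_tsum
        intro p
        have h1 := (hPlip p).hausdorffMeasure_image_le (zero_le_one (α := ℝ))
        rw [MeasureTheory.hausdorffMeasure_real] at h1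
        calc μH[1] (γ '' P p) ≤ (c'.toNNReal : ℝ≥0∞) ^ (1:ℝ) * volume (P p) := h1
          _ = ENNReal.ofReal c' * volume (P p) := by
              rw [ENNReal.rpow_one]; rfl
    _ = ENNReal.ofReal c' * ∑' p, volume (P p) := ENNReal.tsum_mul_left
    _ ≤ ENNReal.ofReal c' * volume E := by
        gcongr
        have hdisj : Pairwise (Function.onFun Disjoint P) := by
          intro p q hpq
          rcases eq_or_ne p.1 q.1 with h1 | h1
          · have h2 : p.2 ≠ q.2 := fun h2 => hpq (Prod.ext h1 h2)
            refine Set.disjoint_left.2 fun t htp htq => ?_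
            have a1 : (p.2:ℝ) * h p.1 ≤ t := htp.2.1
            have a2 : t < ((p.2 + 1 : ℤ) : ℝ) * h p.1 := htp.2.2
            have a3 : (q.2:ℝ) * h q.1 ≤ t := htq.2.1
            have a4 : t < ((q.2 + 1 : ℤ) : ℝ) * h q.1 := htq.2.2
            rw [← h1] at a3 a4
            rcases lt_or_gt_of_ne h2 with hlt | hlt
            · have h5 : ((p.2 + 1 : ℤ) : ℝ) ≤ (q.2 : ℝ) := by exact_mod_cast hlt
              have := mul_le_mul_of_nonneg_right h5 (hhpos p.1).le
              linarith
            · have h5 : ((q.2 + 1 : ℤ) : ℝ) ≤ (p.2 : ℝ) := by exact_mod_cast hlt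
              have := mul_le_mul_of_nonneg_right h5 (hhpos p.1).le
              linarith
          · refine Set.disjoint_left.2 fun t htp htq => ?_
            rcases lt_or_gt_of_ne h1 with hlt | hlt
            · exact htq.1.2.2 (mem_iUnion.2 ⟨p.1, mem_iUnion.2 ⟨hlt, htp.1.2.1⟩⟩)
            · exact htp.1.2.2 (mem_iUnion.2 ⟨q.1, mem_iUnion.2 ⟨hlt, htq.1.2.1⟩⟩)
        calc ∑' p, volume (P p) = volume (⋃ p, P p) := (measure_iUnion hdisj hPmeas).symm
          _ ≤ volume E := measure_mono (iUnion_subset hPsub)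

lemma area_bound {n : ℕ} {γ : ℝ → Euc n} {C : ℝ≥0} (hγ : LipschitzWith C γ)
    {B : Set ℝ} (hB : MeasurableSet B) (hBsub : B ⊆ Icc (0:ℝ) 1) :
    μH[1] (γ '' B) ≤ 4 * ∫⁻ t in B, ENNReal.ofReal ‖deriv γ t‖ := by
  classical
  set c₀ : ℝ := (C : ℝ) + 1 with hc₀
  have hc₀pos : 0 < c₀ := by positivity
  have hderle : ∀ t, DifferentiableAt ℝ γ t → ‖deriv γ t‖ ≤ (C:ℝ) := by
    intro t ht
    exact norm_deriv_le_of_lipschitz (𝕜 := ℝ) hγ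
  set Dset : Set ℝ := {t | DifferentiableAt ℝ γ t} with hDset
  have hDmeas : MeasurableSet Dset := measurableSet_of_differentiableAt ℝ γ
  have hmderiv : Measurable (fun t => ENNReal.ofReal ‖deriv γ t‖) :=
    (measurable_deriv γ).norm.ennreal_ofReal
  have hBvol : volume B ≤ 1 := by
    calc volume B ≤ volume (Icc (0:ℝ) 1) := measure_mono hBsub
      _ = 1 := by simp
  -- null part
  have hnull : μH[1] (γ '' (B \ Dset)) = 0 := by
    have hv : volume (B \ Dset) = 0 := by
      have := hγ.ae_differentiableAt_real (C := C)
      refine measure_mono_null (diff_subset_compl B Dset) ?_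
      simpa [hDset, ae_iff, Set.compl_setOf] using this
    have h1 := hγ.hausdorffMeasure_image_le (zero_le_one (α := ℝ)) (B \ Dset)
    rw [MeasureTheory.hausdorffMeasure_real, hv] at h1
    simpa using h1
  -- zero-derivative part
  set Z : Set ℝ := B ∩ Dset ∩ {t | deriv γ t = 0} with hZ
  have hZmeas : MeasurableSet Z :=
    (hB.inter hDmeas).inter ((measurable_deriv γ) (measurableSet_singleton 0))
  have hzero : μH[1] (γ '' Z) = 0 := by
    by_contra hne
    have hpos : 0 < μH[1] (γ '' Z) := pos_iff_ne_zero.2 hne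
    have htend : Tendsto (fun m : ℕ => ENNReal.ofReal (1 / (m + 1))) atTop (𝓝 0) := by
      rw [← ENNReal.ofReal_zero]
      exact ENNReal.tendsto_ofReal tendsto_one_div_add_atTop_nhds_zero_nat
    obtain ⟨m, hm⟩ := (htend.eventually (gt_mem_nhds hpos)).exists
    have hb := core_bound γ hγ.continuous (le_refl (0:ℝ))
      (by positivity : (0:ℝ) < 1 / (m + 1)) Z hZmeas ?_
    · have : μH[1] (γ '' Z) ≤ ENNReal.ofReal (1 / (m + 1)) := by
        calc μH[1] (γ '' Z) ≤ ENNReal.ofReal (1 / (m + 1)) * volume Z := hb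
          _ ≤ ENNReal.ofReal (1 / (m + 1)) * 1 := by
              gcongr
              exact le_trans (measure_mono (fun t ht => ht.1.1)) hBvol
          _ = ENNReal.ofReal (1 / (m + 1)) := mul_one _
      exact absurd (lt_of_le_of_lt this hm) (lt_irrefl _)
    · intro t ht
      refine ⟨ht.1.2, ?_⟩
      have : deriv γ t = 0 := ht.2
      simp [this]
  -- layers
  set L : ℕ → Set ℝ := fun k => B ∩ Dset ∩
    {t | c₀ * (2:ℝ)⁻¹ ^ (k+1) < ‖deriv γ t‖ ∧ ‖deriv γ t‖ ≤ c₀ * (2:ℝ)⁻¹ ^ k} with hL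
  have hLmeas : ∀ k, MeasurableSet (L k) := by
    intro k
    refine (hB.inter hDmeas).inter (MeasurableSet.inter ?_ ?_)
    · exact measurableSet_lt measurable_const (measurable_deriv γ).norm
    · exact measurableSet_le (measurable_deriv γ).norm measurable_const
  have hLdisj : Pairwise (Function.onFun Disjoint L) := by
    intro k k' hkk
    wlog hlt : k < k' generalizing k k'
    · exact (this hkk.symm (by omega)).symm
    refine Set.disjoint_left.2 fun t ht1 ht2 => ?_
    have h1 : c₀ * (2:ℝ)⁻¹ ^ (k+1) < ‖deriv γ t‖ := ht1.2.1
    have h2 : ‖deriv γ t‖ ≤ c₀ * (2:ℝ)⁻¹ ^ k' := ht2.2.2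
    have h3 : (2:ℝ)⁻¹ ^ k' ≤ (2:ℝ)⁻¹ ^ (k+1) := by
      apply pow_le_pow_of_le_one (by norm_num) (by norm_num) (by omega)
    nlinarith
  -- cover
  have hcover : B ⊆ (B \ Dset) ∪ Z ∪ ⋃ k, L k := by
    intro t ht
    by_cases hdiff : t ∈ Dset
    · by_cases hder0 : deriv γ t = 0
      · exact Or.inl (Or.inr ⟨⟨ht, hdiff⟩, hder0⟩)
      · set v := ‖deriv γ t‖ with hv
        have hvpos : 0 < v := norm_pos_iff.2 hder0
        have hex : ∃ k : ℕ, c₀ * (2:ℝ)⁻¹ ^ (k+1) < v := by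
          obtain ⟨k, hk⟩ := exists_pow_lt_of_lt_one (by positivity : (0:ℝ) < v / c₀)
            (by norm_num : (2:ℝ)⁻¹ < 1)
          refine ⟨k, ?_⟩
          have h4 : (2:ℝ)⁻¹ ^ (k+1) ≤ (2:ℝ)⁻¹ ^ k := by
            apply pow_le_pow_of_le_one (by norm_num) (by norm_num) (by omega)
          have h5 : c₀ * (2:ℝ)⁻¹ ^ k < v := by
            rw [lt_div_iff₀ hc₀pos] at hk
            linarith [hk]
          nlinarith
        refine Or.inr (mem_iUnion.2 ⟨Nat.find hex, ⟨ht, hdiff⟩, Nat.find_spec hex, ?_⟩)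
        rcases Nat.eq_zero_or_pos (Nat.find hex) with h0 | h0
        · rw [h0]
          simpa using le_trans (hderle t hdiff) (by rw [hc₀]; linarith)
        · have := Nat.find_min hex (Nat.sub_lt h0 one_pos)
          rw [not_lt] at this
          calc v ≤ c₀ * (2:ℝ)⁻¹ ^ (Nat.find hex - 1 + 1) := this
            _ = c₀ * (2:ℝ)⁻¹ ^ Nat.find hex := by rw [Nat.sub_add_cancel h0]
    · exact Or.inl (Or.inl ⟨ht, hdiff⟩)
  -- per-layer bound
  have hlayer : ∀ k, μH[1] (γ '' L k) ≤ 4 * ∫⁻ t in L k, ENNReal.ofReal ‖deriv γ t‖ := by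
    intro k
    have hcpos : (0:ℝ) < c₀ * (2:ℝ)⁻¹ ^ k := by positivity
    have hcb := core_bound γ hγ.continuous (le_of_lt hcpos)
      (by linarith : c₀ * (2:ℝ)⁻¹ ^ k < 2 * (c₀ * (2:ℝ)⁻¹ ^ k)) (L k) (hLmeas k)
      (fun t ht => ⟨ht.1.2, ht.2.2⟩)
    have hlow : ENNReal.ofReal (c₀ * (2:ℝ)⁻¹ ^ (k+1)) * volume (L k)
        ≤ ∫⁻ t in L k, ENNReal.ofReal ‖deriv γ t‖ := by
      rw [← setLIntegral_const (L k) (ENNReal.ofReal (c₀ * (2:ℝ)⁻¹ ^ (k+1)))]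
      refine setLIntegral_mono hmderiv fun t ht => ?_
      exact ENNReal.ofReal_le_ofReal (le_of_lt ht.2.1)
    have heq : ENNReal.ofReal (2 * (c₀ * (2:ℝ)⁻¹ ^ k))
        = 4 * ENNReal.ofReal (c₀ * (2:ℝ)⁻¹ ^ (k+1)) := by
      have h1 : (2:ℝ) * (c₀ * (2:ℝ)⁻¹ ^ k) = 4 * (c₀ * (2:ℝ)⁻¹ ^ (k+1)) := by
        rw [pow_succ]; ring
      rw [h1, ENNReal.ofReal_mul (by norm_num : (0:ℝ) ≤ 4)]
      norm_num
    calc μH[1] (γ '' L k) ≤ ENNReal.ofReal (2 * (c₀ * (2:ℝ)⁻¹ ^ k)) * volume (L k) := hcb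
      _ = 4 * (ENNReal.ofReal (c₀ * (2:ℝ)⁻¹ ^ (k+1)) * volume (L k)) := by
          rw [heq, mul_assoc]
      _ ≤ 4 * ∫⁻ t in L k, ENNReal.ofReal ‖deriv γ t‖ := by gcongr
  -- assemble
  calc μH[1] (γ '' B) ≤ μH[1] (γ '' (B \ Dset) ∪ (γ '' Z ∪ ⋃ k, γ '' L k)) := by
        apply measure_mono
        rw [← image_iUnion, ← image_union, ← image_union]
        exact image_mono     (by intro t ht; rcases hcover ht with (h|h)|h
                                 · exact Or.inl h
                                 · exact Or.inr (Or.inl h)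
                                 · exact Or.inr (Or.inr h))
    _ ≤ μH[1] (γ '' (B \ Dset)) + (μH[1] (γ '' Z) + μH[1] (⋃ k, γ '' L k)) :=
        le_trans (measure_union_le _ _) (by gcongr; exact measure_union_le _ _)
    _ = μH[1] (⋃ k, γ '' L k) := by rw [hnull, hzero]; simp
    _ ≤ ∑' k, μH[1] (γ '' L k) := measure_iUnion_le _
    _ ≤ ∑' k, 4 * ∫⁻ t in L k, ENNReal.ofReal ‖deriv γ t‖ :=
        ENNReal.tsum_le_tsum hlayer
    _ = 4 * ∑' k, ∫⁻ t in L k, ENNReal.ofReal ‖deriv γ t‖ := ENNReal.tsum_mul_left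
    _ = 4 * ∫⁻ t in ⋃ k, L k, ENNReal.ofReal ‖deriv γ t‖ := by
        rw [lintegral_iUnion hLmeas hLdisj]
    _ ≤ 4 * ∫⁻ t in B, ENNReal.ofReal ‖deriv γ t‖ := by
        gcongr
        exact iUnion_subset fun k t ht => ht.1.1

/-- Golab-type semicontinuity with a multiplicative constant, for curves. -/
lemma golab {n : ℕ} (γ : ℕ → ℝ → Euc n) (g : ℝ → Euc n)
    (hcont : ∀ j, Continuous (γ j))
    (hconv : ∀ t ∈ Icc (0:ℝ) 1, Tendsto (fun j => γ j t) atTop (𝓝 (g t)))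
    (U : Set (Euc n)) (hU : IsOpen U) :
    μH[1] (g '' Icc (0:ℝ) 1 ∩ U) ≤
      16 * Filter.liminf (fun j => μH[1] (γ j '' Icc (0:ℝ) 1 ∩ U)) atTop := by
  classical
  set K := g '' Icc (0:ℝ) 1 with hK
  set L := Filter.liminf (fun j => μH[1] (γ j '' Icc (0:ℝ) 1 ∩ U)) atTop with hLdef
  rcases eq_or_ne L ⊤ with hLtop | hLtop
  · rw [hLtop]
    simp [ENNReal.mul_top]
  by_cases hconst : ∀ s ∈ Icc (0:ℝ) 1, g s = g 0
  · have hsub1 : K ∩ U ⊆ {g 0} := by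
      rintro x ⟨⟨t, ht, rfl⟩, _⟩
      simp [hconst t ht]
    haveI := MeasureTheory.Measure.noAtoms_hausdorff (X := Euc n) one_pos
    calc μH[1] (K ∩ U) ≤ μH[1] {g 0} := measure_mono hsub1
      _ = 0 := measure_singleton _
      _ ≤ _ := zero_le
  push_neg at hconst
  obtain ⟨s₁, hs₁, hgs₁⟩ := hconst
  set d : ℝ := dist (g s₁) (g 0) with hd
  have hdpos : 0 < d := dist_pos.2 hgs₁
  have h0mem : (0:ℝ) ∈ Icc (0:ℝ) 1 := by norm_num
  -- the key pointwise choice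
  have hchoice : ∀ (δ : ℝ), 0 < δ → ∀ a ∈ K ∩ U, ∃ r : ℝ,
      0 < r ∧ r ≤ δ ∧ closedBall a r ⊆ U ∧
      (∀ᶠ j in atTop, ENNReal.ofReal (r / 2)
        ≤ μH[1] (γ j '' Icc (0:ℝ) 1 ∩ closedBall a r)) := by
    intro δ hδ a ha
    obtain ⟨⟨ta, hta, hgta⟩, haU⟩ := ha
    obtain ⟨ε, hε, hballU⟩ := Metric.isOpen_iff.1 hU a haU
    set r : ℝ := min δ (min (d/8) (ε/2)) with hr
    have hrpos : 0 < r := by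
      apply lt_min hδ (lt_min (by linarith) (by linarith))
    have hrδ : r ≤ δ := min_le_left _ _
    have hrd : r ≤ d/8 := le_trans (min_le_right _ _) (min_le_left _ _)
    have hrε : r ≤ ε/2 := le_trans (min_le_right _ _) (min_le_right _ _)
    have hrU : closedBall a r ⊆ U :=
      subset_trans (closedBall_subset_ball (by linarith)) hballU
    -- a far point
    have hfar : ∃ s ∈ Icc (0:ℝ) 1, d/2 ≤ dist (g s) a := by
      rcases le_or_gt (d/2) (dist (g s₁) a) with h | h
      · exact ⟨s₁, hs₁, h⟩
      · refine ⟨0, h0mem, ?_⟩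
        have ht3 := dist_triangle (g s₁) a (g 0)
        have ht4 : dist a (g 0) = dist (g 0) a := dist_comm _ _
        have ht5 : dist (g s₁) (g 0) = d := rfl
        linarith
    obtain ⟨s, hs, hfar⟩ := hfar
    refine ⟨r, hrpos, hrδ, hrU, ?_⟩
    have hev1 : ∀ᶠ j in atTop, dist (γ j ta) a < r / 2 := by
      have := hconv ta hta
      rw [hgta] at this
      exact this (Metric.ball_mem_nhds a (by linarith))
    have hev2 : ∀ᶠ j in atTop, r < dist (γ j s) a := by
      have h1 : Tendsto (fun j => dist (γ j s) a) atTop (𝓝 (dist (g s) a)) :=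
        (Continuous.tendsto (continuous_id.dist continuous_const) _).comp (hconv s hs)
      apply h1.eventually
      apply eventually_gt_nhds
      linarith
    filter_upwards [hev1, hev2] with j h1 h2
    -- IVT
    set f : ℝ → ℝ := fun u => dist (γ j u) a with hf
    have hfc : ContinuousOn f (uIcc ta s) :=
      ((hcont j).dist continuous_const).continuousOn
    have hIV := intermediate_value_uIcc hfc
    have hfta : f ta < r / 2 := h1
    have hfs : r < f s := h2
    have hsub : Icc (r/2) r ⊆ f '' uIcc ta s := by
      refine subset_trans ?_ hIV
      rw [uIcc_of_le (by linarith : f ta ≤ f s)]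
      exact Icc_subset_Icc (le_of_lt hfta) (le_of_lt hfs)
    have hsub2 : Icc (r/2) r ⊆
        (fun y => dist y a) '' (γ j '' Icc (0:ℝ) 1 ∩ closedBall a r) := by
      intro c hc
      obtain ⟨u, hu, huc⟩ := hsub hc
      have huI : u ∈ Icc (0:ℝ) 1 := uIcc_subset_Icc hta hs hu
      refine ⟨γ j u, ⟨mem_image_of_mem _ huI, ?_⟩, huc⟩
      rw [Metric.mem_closedBall]
      calc dist (γ j u) a = c := huc
        _ ≤ r := hc.2
    calc ENNReal.ofReal (r/2) = volume (Icc (r/2) r) := by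
          rw [Real.volume_Icc]
          congr 1
          ring
      _ = μH[1] (Icc (r/2) r) := by rw [MeasureTheory.hausdorffMeasure_real]
      _ ≤ μH[1] ((fun y => dist y a) '' (γ j '' Icc (0:ℝ) 1 ∩ closedBall a r)) :=
          measure_mono hsub2
      _ ≤ ((1:ℝ≥0) : ℝ≥0∞) ^ (1:ℝ) * μH[1] (γ j '' Icc (0:ℝ) 1 ∩ closedBall a r) :=
          (LipschitzWith.dist_left a).hausdorffMeasure_image_le zero_le_one _
      _ = μH[1] (γ j '' Icc (0:ℝ) 1 ∩ closedBall a r) := by simp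
  -- Vitali construction, for each scale 1/(m+1)
  have key : ∀ m : ℕ, ∃ (u : Set (Euc n)) (rad : Euc n → ℝ),
      u.Countable ∧ (∀ a ∈ u, 0 < rad a ∧ rad a ≤ 1/(m+1)) ∧
      (K ∩ U ⊆ ⋃ a ∈ u, closedBall a (4 * rad a)) ∧
      (∑' a : u, ENNReal.ofReal (rad (a:Euc n) / 2)) ≤ L := by
    intro m
    have hδm : (0:ℝ) < 1/(m+1) := by positivity
    choose! rad hrpos hrδ hrU hrev using hchoice (1/(m+1)) hδm
    obtain ⟨u, husub, hudisj, hucov⟩ :=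
      Vitali.exists_disjoint_subfamily_covering_enlargement_closedBall (K ∩ U) id rad (1/(m+1))
        (fun a ha => hrδ a ha) 4 (by norm_num)
    refine ⟨u, rad, ?_, ?_, ?_, ?_⟩
    · refine Set.PairwiseDisjoint.countable_of_isOpen
        (s := fun a => ball (id a) (rad a)) ?_ ?_ ?_
      · exact hudisj.mono (fun a => ball_subset_closedBall)
      · exact fun a _ => isOpen_ball
      · exact fun a ha => ⟨a, mem_ball_self (hrpos a (husub ha))⟩
    · exact fun a ha => ⟨hrpos a (husub ha), hrδ a (husub ha)⟩
    · intro a ha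
      obtain ⟨b, hb, hsubb⟩ := hucov a ha
      exact mem_biUnion hb (hsubb (mem_closedBall_self (hrpos a ha).le))
    · rw [ENNReal.tsum_eq_iSup_sum]
      refine iSup_le fun v => ?_
      have hev : ∀ᶠ j in atTop, ∀ a ∈ v, ENNReal.ofReal (rad (a:Euc n) / 2)
          ≤ μH[1] (γ j '' Icc (0:ℝ) 1 ∩ closedBall (a : Euc n) (rad (a:Euc n))) := by
        rw [eventually_all_finset]
        exact fun a _ => hrev (a:Euc n) (husub a.2)
      refine Filter.le_liminf_of_le (by isBoundedDefault) ?_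
      filter_upwards [hev] with j hj
      have hKjm : MeasurableSet (γ j '' Icc (0:ℝ) 1) :=
        (isCompact_Icc.image (hcont j)).measurableSet
      calc ∑ a ∈ v, ENNReal.ofReal (rad (a:Euc n) / 2)
          ≤ ∑ a ∈ v, μH[1] (γ j '' Icc (0:ℝ) 1 ∩ closedBall (a:Euc n) (rad (a:Euc n))) :=
            Finset.sum_le_sum hj
        _ = μH[1] (⋃ a ∈ v, γ j '' Icc (0:ℝ) 1 ∩ closedBall (a:Euc n) (rad (a:Euc n))) := by
            refine (measure_biUnion_finset ?_ ?_).symm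
            · intro a ha b hb hab
              have hane : (a:Euc n) ≠ (b:Euc n) := fun h => hab (Subtype.ext h)
              have := hudisj a.2 b.2 hane
              exact this.mono inf_le_right inf_le_right
            · exact fun a _ => hKjm.inter measurableSet_closedBall
        _ ≤ μH[1] (γ j '' Icc (0:ℝ) 1 ∩ U) := by
            apply measure_mono
            refine iUnion₂_subset fun a _ => inter_subset_inter_right _ ?_
            exact hrU (a:Euc n) (husub a.2)
  choose u rad hcount hbounds hcov hsum using key
  haveI : ∀ m : ℕ, Countable ↥(u m) := fun m => (hcount m).to_subtype
  have htend : Tendsto (fun m : ℕ => ENNReal.ofReal (8/(m+1))) atTop (𝓝 0) := by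
    rw [← ENNReal.ofReal_zero]
    apply ENNReal.tendsto_ofReal
    have h8 : Tendsto (fun m : ℕ => 8 * (1/(m+1) : ℝ)) atTop (𝓝 (8 * 0)) :=
      tendsto_one_div_add_atTop_nhds_zero_nat.const_mul 8
    simpa [mul_one_div, div_eq_mul_inv] using h8
  have hdiam : ∀ (m : ℕ) (a : ↥(u m)),
      EMetric.diam (closedBall (a:Euc n) (4 * rad m a)) ≤ ENNReal.ofReal (8 * rad m a) := by
    intro m a
    have hra := (hbounds m a a.2).1
    rw [← Metric.emetric_closedBall (by positivity : (0:ℝ) ≤ 4 * rad m a)]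
    calc EMetric.diam (EMetric.closedBall (a:Euc n) (ENNReal.ofReal (4 * rad m a)))
        ≤ 2 * ENNReal.ofReal (4 * rad m a) := EMetric.diam_closedBall
      _ = ENNReal.ofReal (8 * rad m a) := by
          rw [← ENNReal.ofReal_ofNat 2, ← ENNReal.ofReal_mul (by norm_num)]
          norm_num
          ring_nf
  have hfinal := MeasureTheory.Measure.hausdorffMeasure_le_liminf_tsum (X := Euc n) 1 (K ∩ U)
      (l := atTop) (fun m : ℕ => ENNReal.ofReal (8/(m+1))) htend
      (fun m (a : ↥(u m)) => closedBall (a : Euc n) (4 * rad m a)) ?_ ?_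
  · refine le_trans hfinal ?_
    apply Filter.liminf_le_of_frequently_le'
    apply Filter.Eventually.frequently
    apply Filter.Eventually.of_forall
    intro m
    calc (∑' a : ↥(u m), EMetric.diam (closedBall (a:Euc n) (4 * rad m a)) ^ (1:ℝ))
        ≤ ∑' a : ↥(u m), 16 * ENNReal.ofReal (rad m a / 2) := by
          apply ENNReal.tsum_le_tsum
          intro a
          rw [ENNReal.rpow_one]
          refine le_trans (hdiam m a) ?_
          have : (8 : ℝ) * rad m a = 16 * (rad m a / 2) := by ring
          rw [this, ENNReal.ofReal_mul (by norm_num : (0:ℝ) ≤ 16)]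
          norm_num
      _ = 16 * ∑' a : ↥(u m), ENNReal.ofReal (rad m a / 2) := ENNReal.tsum_mul_left
      _ ≤ 16 * L := by gcongr; exact hsum m
  · apply Filter.Eventually.of_forall
    intro m a
    refine le_trans (hdiam m a) (ENNReal.ofReal_le_ofReal ?_)
    have h1 := (hbounds m a a.2).2
    have h2 : 8/((m:ℝ)+1) = 8 * (1/((m:ℝ)+1)) := by ring
    linarith
  · apply Filter.Eventually.of_forall
    intro m x hx
    obtain ⟨b, hb, hxb⟩ := mem_iUnion₂.1 (hcov m hx)
    exact mem_iUnion.2 ⟨⟨b, hb⟩, hxb⟩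

lemma slevel_meas {n : ℕ} {S : Set (Euc n)} (hSmeas : MeasurableSet S) {b : Euc n → ℝ≥0∞}
    (hlsc : LowerSemicontinuousOn b S) (lam : ℝ≥0∞) :
    MeasurableSet {z ∈ S | b z ≤ lam} := by
  set Sl := {z ∈ S | b z ≤ lam} with hSl
  have hkey : Sl = S ∩ closure Sl := by
    apply Subset.antisymm
    · exact subset_inter (fun z hz => hz.1) subset_closure
    · rintro z ⟨hzS, hzc⟩
      by_contra hzn
      have hlt : lam < b z := by
        rcases lt_or_ge lam (b z) with h | h
        · exact h
        · exact absurd ⟨hzS, h⟩ hzn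
      have hnb : (𝓝[Sl] z).NeBot := mem_closure_iff_nhdsWithin_neBot.1 hzc
      have hmono : 𝓝[Sl] z ≤ 𝓝[S] z := nhdsWithin_mono z (fun x hx => hx.1)
      have hev1 : ∀ᶠ x in 𝓝[Sl] z, lam < b x := hmono (hlsc z hzS lam hlt)
      have hev2 : ∀ᶠ x in 𝓝[Sl] z, x ∈ Sl := self_mem_nhdsWithin
      obtain ⟨x, hx1, hx2⟩ := (hev1.and hev2).exists
      exact absurd hx2.2 (not_le.2 hx1)
  rw [hkey]
  exact hSmeas.inter isClosed_closure.measurableSet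

/-- Limit of paths with uniformly bounded cost, case `a = ∞`: under the finiteness assumption
on the sublevel sets `S_λ`, the uniform limit `γ` of `C`-Lipschitz paths with uniformly
bounded cost satisfies `H^1(γ([0,1]) \ S) = 0`, and for each `δ > 0` there is `λ < ∞` with
`H^1(γ([0,1]) \ S_λ) ≤ δ`. -/
theorem limit_path_lies_on_network {n : ℕ} (S : Set (Euc n))
    (hSrect : Countably1Rectifiable S) (hSmeas : MeasurableSet S)
    (b : Euc n → ℝ≥0∞) (hlsc : LowerSemicontinuousOn b S) (hbout : ∀ z ∉ S, b z = ⊤)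
    (hfin : ∀ lam : ℝ≥0∞, lam ≠ ⊤ → μH[1] {z ∈ S | b z ≤ lam} ≠ ⊤)
    (C : ℝ≥0) (γ : ℕ → ℝ → Euc n) (γlim : ℝ → Euc n)
    (hlip : ∀ j, LipschitzWith C (γ j))
    (hcube : ∀ j, ∀ t ∈ Icc (0:ℝ) 1, γ j t ∈ cube n)
    (M : ℝ≥0∞) (hM : M ≠ ⊤) (hbound : ∀ j, pathCost b (γ j) ≤ M)
    (hconv : TendstoUniformlyOn γ γlim atTop (Icc (0:ℝ) 1)) :
    μH[1] ((γlim '' Icc (0:ℝ) 1) \ S) = 0 ∧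
    ∀ δ : ℝ≥0∞, 0 < δ → ∃ lam : ℝ≥0∞, lam ≠ ⊤ ∧
      μH[1] ((γlim '' Icc (0:ℝ) 1) \ {z ∈ S | b z ≤ lam}) ≤ δ := by
  classical
  set K := γlim '' Icc (0:ℝ) 1 with hK
  set Sl : ℝ≥0∞ → Set (Euc n) := fun lam => {z ∈ S | b z ≤ lam} with hSl
  have hSlmeas : ∀ lam, MeasurableSet (Sl lam) := fun lam => slevel_meas hSmeas hlsc lam
  have hconv' : ∀ t ∈ Icc (0:ℝ) 1, Tendsto (fun j => γ j t) atTop (𝓝 (γlim t)) :=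
    fun t ht => hconv.tendsto_at ht
  -- cost bound for each approximating path
  have cost : ∀ (j : ℕ) (lam : ℝ≥0∞), lam ≠ 0 → lam ≠ ⊤ →
      μH[1] ((γ j '' Icc (0:ℝ) 1) \ Sl lam) ≤ 4 * (M / lam) := by
    intro j lam h0 htop
    set A : Set ℝ := Icc (0:ℝ) 1 ∩ (γ j)⁻¹' (Sl lam)ᶜ with hA
    have hAmeas : MeasurableSet A :=
      measurableSet_Icc.inter ((hlip j).continuous.measurable (hSlmeas lam).compl)
    have hAsub : A ⊆ Icc (0:ℝ) 1 := inter_subset_left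
    have hsub : (γ j '' Icc (0:ℝ) 1) \ Sl lam ⊆ γ j '' A := by
      rintro x ⟨⟨t, ht, rfl⟩, hx⟩
      exact ⟨t, ⟨ht, hx⟩, rfl⟩
    have hmder : Measurable (fun t => ENNReal.ofReal ‖deriv (γ j) t‖) :=
      (measurable_deriv (γ j)).norm.ennreal_ofReal
    have hcost : lam * ∫⁻ t in A, ENNReal.ofReal ‖deriv (γ j) t‖ ≤ M := by
      have hpt : ∀ t, A.indicator (fun t => lam * ENNReal.ofReal ‖deriv (γ j) t‖) t
          ≤ b (γ j t) * ENNReal.ofReal ‖deriv (γ j) t‖ := by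
        intro t
        by_cases ht : t ∈ A
        · rw [indicator_of_mem ht]
          apply mul_le_mul_left
          have h2 : γ j t ∉ Sl lam := ht.2
          by_cases hS : γ j t ∈ S
          · have : ¬ b (γ j t) ≤ lam := fun h => h2 ⟨hS, h⟩
            exact (not_le.1 this).le
          · rw [hbout _ hS]; exact le_top
        · rw [indicator_of_notMem ht]; exact zero_le
      calc lam * ∫⁻ t in A, ENNReal.ofReal ‖deriv (γ j) t‖
          = ∫⁻ t in A, lam * ENNReal.ofReal ‖deriv (γ j) t‖ :=
            (lintegral_const_mul lam hmder).symm
        _ = ∫⁻ t in Icc (0:ℝ) 1,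
              A.indicator (fun t => lam * ENNReal.ofReal ‖deriv (γ j) t‖) t := by
            rw [lintegral_indicator hAmeas, Measure.restrict_restrict hAmeas,
              inter_eq_self_of_subset_left hAsub]
        _ ≤ ∫⁻ t in Icc (0:ℝ) 1, b (γ j t) * ENNReal.ofReal ‖deriv (γ j) t‖ :=
            lintegral_mono hpt
        _ = pathCost b (γ j) := rfl
        _ ≤ M := hbound j
    have hint : ∫⁻ t in A, ENNReal.ofReal ‖deriv (γ j) t‖ ≤ M / lam := by
      rw [ENNReal.le_div_iff_mul_le (Or.inl h0) (Or.inl htop), mul_comm]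
      exact hcost
    calc μH[1] ((γ j '' Icc (0:ℝ) 1) \ Sl lam) ≤ μH[1] (γ j '' A) := measure_mono hsub
      _ ≤ 4 * ∫⁻ t in A, ENNReal.ofReal ‖deriv (γ j) t‖ := area_bound (hlip j) hAmeas hAsub
      _ ≤ 4 * (M / lam) := by gcongr
  -- main estimate
  have main : ∀ lam : ℝ≥0∞, lam ≠ 0 → lam ≠ ⊤ → μH[1] (K \ Sl lam) ≤ 64 * (M / lam) := by
    intro lam h0 htop
    apply ENNReal.le_of_forall_pos_le_add
    intro ε hε _
    set ε16 : ℝ≥0∞ := (ε : ℝ≥0∞) / 16 with hε16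
    have hε16ne : ε16 ≠ 0 := by
      simp only [hε16, ne_eq, ENNReal.div_eq_zero_iff]
      push_neg
      exact ⟨by exact_mod_cast hε.ne', by norm_num⟩
    haveI : IsFiniteMeasure ((μH[1] : Measure (Euc n)).restrict (Sl lam)) := by
      constructor
      rw [Measure.restrict_apply_univ]
      exact (hfin lam htop).lt_top
    obtain ⟨F, hFsub, hFclosed, hFlt⟩ :=
      (hSlmeas lam).exists_isClosed_diff_lt
        (μ := (μH[1] : Measure (Euc n)).restrict (Sl lam))
        (by rw [Measure.restrict_apply (hSlmeas lam), inter_self]; exact hfin lam htop)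
        hε16ne
    have hFlt' : μH[1] (Sl lam \ F) < ε16 := by
      rwa [Measure.restrict_apply ((hSlmeas lam).diff hFclosed.measurableSet),
        inter_eq_self_of_subset_left diff_subset] at hFlt
    have hgolab := golab γ γlim (fun j => (hlip j).continuous) hconv' Fᶜ
      hFclosed.isOpen_compl
    have hperj : ∀ j, μH[1] ((γ j '' Icc (0:ℝ) 1) ∩ Fᶜ) ≤ 4 * (M / lam) + ε16 := by
      intro j
      have hsubj : (γ j '' Icc (0:ℝ) 1) ∩ Fᶜ ⊆
          ((γ j '' Icc (0:ℝ) 1) \ Sl lam) ∪ (Sl lam \ F) := by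
        rintro x ⟨hx, hxF⟩
        by_cases hxs : x ∈ Sl lam
        · exact Or.inr ⟨hxs, hxF⟩
        · exact Or.inl ⟨hx, hxs⟩
      calc μH[1] ((γ j '' Icc (0:ℝ) 1) ∩ Fᶜ)
          ≤ μH[1] (((γ j '' Icc (0:ℝ) 1) \ Sl lam) ∪ (Sl lam \ F)) := measure_mono hsubj
        _ ≤ μH[1] ((γ j '' Icc (0:ℝ) 1) \ Sl lam) + μH[1] (Sl lam \ F) := measure_union_le _ _
        _ ≤ 4 * (M / lam) + ε16 := add_le_add (cost j lam h0 htop) hFlt'.le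
    have hliminf : Filter.liminf (fun j => μH[1] ((γ j '' Icc (0:ℝ) 1) ∩ Fᶜ)) atTop
        ≤ 4 * (M / lam) + ε16 := by
      apply Filter.liminf_le_of_frequently_le'
      exact Filter.Eventually.frequently (Filter.Eventually.of_forall hperj)
    calc μH[1] (K \ Sl lam) ≤ μH[1] (K ∩ Fᶜ) := by
          apply measure_mono
          intro x hx
          exact ⟨hx.1, fun hxF => hx.2 (hFsub hxF)⟩
      _ ≤ 16 * Filter.liminf (fun j => μH[1] ((γ j '' Icc (0:ℝ) 1) ∩ Fᶜ)) atTop := hgolab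
      _ ≤ 16 * (4 * (M / lam) + ε16) := by gcongr
      _ = 64 * (M / lam) + ε := by
          rw [mul_add, hε16, ENNReal.mul_div_cancel' (by norm_num) (by norm_num)]
          ring_nf
  constructor
  · -- first conclusion
    have hbnd : ∀ k : ℕ, μH[1] (K \ S) ≤ 64 * M * ((k+1 : ℕ) : ℝ≥0∞)⁻¹ := by
      intro k
      have h0 : ((k+1:ℕ) : ℝ≥0∞) ≠ 0 := by exact_mod_cast Nat.succ_ne_zero k
      have htop : ((k+1:ℕ) : ℝ≥0∞) ≠ ⊤ := ENNReal.natCast_ne_top _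
      have hsub : K \ S ⊆ K \ Sl ((k+1:ℕ) : ℝ≥0∞) :=
        diff_subset_diff_right (fun z hz => hz.1)
      calc μH[1] (K \ S) ≤ μH[1] (K \ Sl ((k+1:ℕ) : ℝ≥0∞)) := measure_mono hsub
        _ ≤ 64 * (M / ((k+1:ℕ) : ℝ≥0∞)) := main _ h0 htop
        _ = 64 * M * ((k+1 : ℕ) : ℝ≥0∞)⁻¹ := by rw [div_eq_mul_inv, mul_assoc]
    have htend : Tendsto (fun k : ℕ => 64 * M * ((k+1 : ℕ) : ℝ≥0∞)⁻¹) atTop (𝓝 0) := by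
      have h1 : Tendsto (fun k : ℕ => ((k+1 : ℕ) : ℝ≥0∞)⁻¹) atTop (𝓝 0) :=
        ENNReal.tendsto_inv_nat_nhds_zero.comp (tendsto_add_atTop_nat 1)
      have h2 := ENNReal.Tendsto.const_mul h1 (a := 64 * M)
        (Or.inr (ENNReal.mul_ne_top (by norm_num) hM))
      simpa using h2
    have : μH[1] (K \ S) ≤ 0 := ge_of_tendsto htend (Filter.Eventually.of_forall hbnd)
    exact le_antisymm this zero_le
  · -- second conclusion
    intro δ hδ
    rcases eq_or_ne δ ⊤ with rfl | hδtop
    · exact ⟨1, ENNReal.one_ne_top, le_top⟩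
    set lam : ℝ≥0∞ := 64 * M / δ + 1 with hlam
    have hlamtop : lam ≠ ⊤ := by
      rw [hlam]
      apply ENNReal.add_ne_top.2
      refine ⟨?_, ENNReal.one_ne_top⟩
      exact (ENNReal.div_lt_top (ENNReal.mul_ne_top (by norm_num) hM) hδ.ne').ne
    have hlam0 : lam ≠ 0 := by
      rw [hlam]
      simp
    refine ⟨lam, hlamtop, ?_⟩
    calc μH[1] (K \ Sl lam) ≤ 64 * (M / lam) := main lam hlam0 hlamtop
      _ = 64 * M / lam := by rw [div_eq_mul_inv, div_eq_mul_inv, mul_assoc]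
      _ ≤ δ := by
          rw [ENNReal.div_le_iff_le_mul (Or.inl hlam0) (Or.inl hlamtop)]
          calc 64 * M = δ * (64 * M / δ) :=
                (ENNReal.mul_div_cancel hδ.ne' hδtop).symm
            _ ≤ δ * lam := by
                apply mul_le_mul_right
                rw [hlam]
                exact le_self_add
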